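/- Let H be the binary entropy function (natural log), α ∈ (0,1), γ > 1/2 with 2αγ < 1. Then H(α) - 2γα·H(1/(2γ)) > 0. -/
import Mathlib

noncomputable def binEnt (x : ℝ) : ℝ := -x * Real.log x - (1 - x) * Real.log (1 - x)

lemma binEnt_eq (x : ℝ) : binEnt x = Real.binEntropy x := by
  simp [binEnt, Real.binEntropy, Real.log_inv]
  ring

theorem entropy_denominator_pos (α γ : ℝ) (hα0 : 0 < α) (hα1 : α < 1)
    (hγ : γ > 1 / 2) (hαγ : 2 * α * γ < 1) :
    binEnt α - 2 * γ * α * binEnt (1 / (2 * γ)) > 0 := by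
  have hγ0 : 0 < 2 * γ := by linarith
  have hx : (1 : ℝ) / (2 * γ) ∈ Set.Icc (0:ℝ) 1 := by
    constructor
    · positivity
    · rw [div_le_one hγ0]; linarith
  have hy : (0 : ℝ) ∈ Set.Icc (0:ℝ) 1 := by norm_num
  have hne : (1 : ℝ) / (2 * γ) ≠ 0 := by positivity
  have ha : 0 < 2 * γ * α := by positivity
  have hb : 0 < 1 - 2 * γ * α := by nlinarith
  have hab : 2 * γ * α + (1 - 2 * γ * α) = 1 := by ring
  have := Real.strictConcave_binEntropy.2 hx hy hne ha hb hab
  simp only [smul_eq_mul, Real.binEntropy_zero, mul_zero, add_zero] at this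
  have hcomb : 2 * γ * α * (1 / (2 * γ)) = α := by
    field_simp
  rw [hcomb] at this
  rw [binEnt_eq, binEnt_eq]
  linarith
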